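/- Let a < 1/k1 with k1 > 0 and d1 > 0, and L > sqrt(d1/(1 - a·k1))·π. Set η = 1 - k1·a - d1·π²/L² and φ(x) = sin(πx/L). Then η > 0 and the function u̲(x) = η·φ(x) satisfies d1 u̲''(x) + u̲(x)(1 - u̲(x) - k1·a) ≥ 0 for all x ∈ (0, L), with u̲(0) = u̲(L) = 0 and 0 < u̲(x) ≤ 1 - k1·a on (0, L). -/

import Mathlib

open Real Set

lemma deriv_csin' (c k : ℝ) : deriv (fun y : ℝ => c * Real.sin (k * y))
    = fun y : ℝ => c * (Real.cos (k * y) * k) := by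
  funext y
  have h1 : HasDerivAt (fun y : ℝ => k * y) k y := by
    simpa using (hasDerivAt_id y).const_mul k
  have h2 : HasDerivAt (fun y : ℝ => Real.sin (k * y)) (Real.cos (k * y) * k) y := by
    simpa [Function.comp_def] using (Real.hasDerivAt_sin (k * y)).comp y h1
  exact (h2.const_mul c).deriv

lemma deriv2_csin (c k x : ℝ) :
    deriv (deriv (fun y : ℝ => c * Real.sin (k * y))) x
      = -(c * k ^ 2 * Real.sin (k * x)) := by
  rw [deriv_csin']
  have h : HasDerivAt (fun y : ℝ => c * (Real.cos (k * y) * k))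
      (c * ((-Real.sin (k * x) * k) * k)) x := by
    have h1 : HasDerivAt (fun y : ℝ => k * y) k x := by
      simpa using (hasDerivAt_id x).const_mul k
    have h2 : HasDerivAt (fun y : ℝ => Real.cos (k * y)) (-Real.sin (k * x) * k) x := by
      simpa [Function.comp_def] using (Real.hasDerivAt_cos (k * x)).comp x h1
    exact (h2.mul_const k).const_mul c
  rw [h.deriv]; ring

/-- Sub-solution inequality for `u̲ = η sin (π x / L)` in the barrier construction. -/
theorem subsolution_u_barrier
    (L d1 a k1 : ℝ) (hd1 : 0 < d1) (ha : 0 < a) (hk1 : 0 < k1)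
    (hak1 : a < 1 / k1)
    (hLgt : L > Real.sqrt (d1 / (1 - a * k1)) * π) :
    0 < 1 - k1 * a - d1 * π ^ 2 / L ^ 2 ∧
    (∀ x ∈ Ioo (0 : ℝ) L,
      d1 * deriv (deriv (fun y : ℝ =>
          (1 - k1 * a - d1 * π ^ 2 / L ^ 2) * Real.sin (π * y / L))) x
        + ((1 - k1 * a - d1 * π ^ 2 / L ^ 2) * Real.sin (π * x / L)) *
            (1 - (1 - k1 * a - d1 * π ^ 2 / L ^ 2) * Real.sin (π * x / L) - k1 * a) ≥ 0) ∧
    (1 - k1 * a - d1 * π ^ 2 / L ^ 2) * Real.sin (π * 0 / L) = 0 ∧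
    (1 - k1 * a - d1 * π ^ 2 / L ^ 2) * Real.sin (π * L / L) = 0 ∧
    (∀ x ∈ Ioo (0 : ℝ) L,
      0 < (1 - k1 * a - d1 * π ^ 2 / L ^ 2) * Real.sin (π * x / L) ∧
      (1 - k1 * a - d1 * π ^ 2 / L ^ 2) * Real.sin (π * x / L) ≤ 1 - k1 * a) := by
  have hak : a * k1 < 1 := by
    have := (lt_div_iff₀ hk1).mp hak1
    linarith
  have hs : (0:ℝ) < 1 - a * k1 := by linarith
  have hpi : (0:ℝ) < π := Real.pi_pos
  have hsq : 0 < Real.sqrt (d1 / (1 - a * k1)) :=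
    Real.sqrt_pos.mpr (div_pos hd1 hs)
  have hL : 0 < L := lt_trans (mul_pos hsq hpi) hLgt
  have hL2 : d1 / (1 - a * k1) * π ^ 2 < L ^ 2 := by
    have h1 : Real.sqrt (d1 / (1 - a * k1)) * π < L := hLgt
    have h2 : (Real.sqrt (d1 / (1 - a * k1)) * π) ^ 2 < L ^ 2 := by
      apply pow_lt_pow_left₀ h1 (le_of_lt (mul_pos hsq hpi))
      norm_num
    calc d1 / (1 - a * k1) * π ^ 2
        = (Real.sqrt (d1 / (1 - a * k1))) ^ 2 * π ^ 2 := by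
          rw [Real.sq_sqrt (le_of_lt (div_pos hd1 hs))]
      _ = (Real.sqrt (d1 / (1 - a * k1)) * π) ^ 2 := by ring
      _ < L ^ 2 := h2
  have hL2pos : (0:ℝ) < L ^ 2 := by positivity
  have heta : 0 < 1 - k1 * a - d1 * π ^ 2 / L ^ 2 := by
    have h3 : d1 * π ^ 2 / L ^ 2 < 1 - a * k1 := by
      rw [div_lt_iff₀ hL2pos]
      have h4 := mul_lt_mul_of_pos_right hL2 hs
      have h5 : d1 / (1 - a * k1) * π ^ 2 * (1 - a * k1) = d1 * π ^ 2 := by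
        field_simp
      nlinarith [h4, h5]
    nlinarith [h3]
  set η := 1 - k1 * a - d1 * π ^ 2 / L ^ 2 with hη
  have hfun : (fun y : ℝ => η * Real.sin (π * y / L))
      = fun y : ℝ => η * Real.sin ((π / L) * y) := by
    funext y; congr 1; ring_nf
  have hsinb : ∀ x ∈ Ioo (0:ℝ) L, 0 < Real.sin (π * x / L) ∧ Real.sin (π * x / L) ≤ 1 := by
    intro x hx
    refine ⟨Real.sin_pos_of_pos_of_lt_pi (div_pos (mul_pos hpi hx.1) hL) ?_, Real.sin_le_one _⟩
    rw [div_lt_iff₀ hL]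
    nlinarith [hx.2, hpi]
  refine ⟨heta, ?_, by simp, by simp [Real.sin_pi, mul_div_assoc, div_self hL.ne'], ?_⟩
  · intro x hx
    obtain ⟨hsp, hsl⟩ := hsinb x hx
    rw [hfun, deriv2_csin]
    have harg : (π / L) * x = π * x / L := by ring
    rw [harg]
    set s := Real.sin (π * x / L) with hs'
    have hkey : d1 * -(η * (π / L) ^ 2 * s) + η * s * (1 - η * s - k1 * a)
        = η ^ 2 * s * (1 - s) := by
      rw [hη]
      field_simp
      ring
    rw [hkey]
    have : 0 ≤ η ^ 2 * s * (1 - s) := by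
      apply mul_nonneg (mul_nonneg (sq_nonneg _) hsp.le)
      linarith
    linarith
  · intro x hx
    obtain ⟨hsp, hsl⟩ := hsinb x hx
    constructor
    · exact mul_pos heta hsp
    · have h1 : η * Real.sin (π * x / L) ≤ η * 1 := by
        apply mul_le_mul_of_nonneg_left hsl heta.le
      rw [mul_one] at h1
      have h2 : η ≤ 1 - k1 * a := by
        rw [hη]; have : 0 ≤ d1 * π ^ 2 / L ^ 2 := by positivity
        linarith
      exact h1.trans h2
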